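/- Let $R:\mathbb{R}\to\mathbb{R}$ be a differentiable function of $s$ (for fixed $t$, $n$), and define $r(s) := \tfrac14[R'(s)+(2s-t-R(s))R(s)]$. If $r$ satisfies $r'(s) = \tfrac{2r(s)^2}{R(s)} - R(s)(r(s)+n)$ and $R(s)\neq 0$, then $R''(s) = \tfrac{(R'(s))^2}{2R(s)} + \tfrac32 R(s)^3 - (4s-2t)R(s)^2 + \big(2s^2 - 4n - 2 - 2st + \tfrac12 t^2\big)R(s)$. -/

import Mathlib

theorem stmt_3 (t n : ℝ) (R r : ℝ → ℝ)
    (hR : Differentiable ℝ R) (hR' : Differentiable ℝ (deriv R))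
    (hRne : ∀ s, R s ≠ 0)
    (hr : ∀ s, r s = (1 / 4) * (deriv R s + (2 * s - t - R s) * R s))
    (hric : ∀ s, deriv r s = 2 * (r s) ^ 2 / R s - R s * (r s + n)) :
    ∀ s, deriv (deriv R) s = (deriv R s) ^ 2 / (2 * R s) + (3 / 2) * (R s) ^ 3
      - (4 * s - 2 * t) * (R s) ^ 2
      + (2 * s ^ 2 - 4 * n - 2 - 2 * s * t + (1 / 2) * t ^ 2) * R s := by
  intro s
  have hreq : r = fun s => (1 / 4) * (deriv R s + (2 * s - t - R s) * R s) :=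
    funext hr
  have hd : HasDerivAt (fun s => (1 / 4) * (deriv R s + (2 * s - t - R s) * R s))
      ((1 / 4) * (deriv (deriv R) s +
        ((2 - deriv R s) * R s + (2 * s - t - R s) * deriv R s))) s := by
    have h1 : HasDerivAt (fun s : ℝ => 2 * s - t - R s) (2 - deriv R s) s := by
      have := ((hasDerivAt_id s).const_mul 2).sub_const t
      exact (this.sub (hR s).hasDerivAt).congr_deriv (by simp)
    exact (((hR' s).hasDerivAt).add (h1.mul (hR s).hasDerivAt)).const_mul (1 / 4)
  have hrd : deriv r s = (1 / 4) * (deriv (deriv R) s +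
      ((2 - deriv R s) * R s + (2 * s - t - R s) * deriv R s)) := by
    rw [hreq]; exact hd.deriv
  have h2 := hric s
  rw [hrd, hr s] at h2
  have hne := hRne s
  field_simp at h2 ⊢
  nlinarith [sq_nonneg (R s), h2, sq_nonneg (deriv R s)]
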